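/- Equilibrium and characteristic polynomial of the linearization: the point e = (a₁/(a₀ℓ), b₁/(a₀ℓ), a₁/(a₀ℓ), b₁/(a₀ℓ), 0) ∈ ℝ⁵ is a zero of the vector field F, and the characteristic polynomial of the Jacobian matrix DF(e) equals (X + a₀)³ · (X² − 2τX + ζℓa₀/(2π)), where τ = −(1/4)(2a₀ + ζℓ/π + 2λa₁/(a₀ℓ)). In particular DF(e) has the eigenvalue −a₀ with multiplicity three, and two further eigenvalues τ ± √(τ² − ζℓa₀/(2π)). -/

import Mathlib

open Real Set Polynomial

/-- The first-order vector field of the two-row model in the variables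
`(p₁ᶜ, p₁ˢ, q₁ᶜ, q₁ˢ, x)`, with `ζ = 2πk/(ηℓ)` and `λ = 2π²U/(ηℓ)`. -/
noncomputable def motorField (l zeta lam a0 a1 b1 : ℝ) (p : Fin 5 → ℝ) : Fin 5 → ℝ :=
  ![-a0 * p 0 + (zeta * p 4 + (lam / 2) * (p 1 - p 3)) * p 1 + a1 / l,
    -a0 * p 1 - (zeta * p 4 + (lam / 2) * (p 1 - p 3)) * p 0 + b1 / l,
    -a0 * p 2 - (zeta * p 4 + (lam / 2) * (p 1 - p 3)) * p 3 + a1 / l,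
    -a0 * p 3 + (zeta * p 4 + (lam / 2) * (p 1 - p 3)) * p 2 + b1 / l,
    -(l / (2 * π)) * (zeta * p 4 + (lam / 2) * (p 1 - p 3))]

/-- The equilibrium point `e = (a₁/(a₀ℓ), b₁/(a₀ℓ), a₁/(a₀ℓ), b₁/(a₀ℓ), 0)`. -/
noncomputable def motorEq (l a0 a1 b1 : ℝ) : Fin 5 → ℝ :=
  ![a1 / (a0 * l), b1 / (a0 * l), a1 / (a0 * l), b1 / (a0 * l), 0]

/-- The Jacobian matrix of the vector field at the equilibrium point. -/
noncomputable def motorJac (l zeta lam a0 a1 b1 : ℝ) : Matrix (Fin 5) (Fin 5) ℝ :=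
  Matrix.of fun i j =>
    fderiv ℝ (motorField l zeta lam a0 a1 b1) (motorEq l a0 a1 b1) (Pi.single j 1) i

set_option maxHeartbeats 1000000 in
/-- Characteristic polynomial of the relevant explicitly given 5×5 matrix. -/
lemma motor_charpoly_aux (a0 mA mB zA zB w g : ℝ) :
    (!![-a0, mB, 0, -mB, zB;
        0, -a0 - mA, 0, mA, -zA;
        0, -mB, -a0, mB, -zB;
        0, mA, 0, -a0 - mA, zA;
        0, -w, 0, w, -g] : Matrix (Fin 5) (Fin 5) ℝ).charpoly
    = (X + C a0)^3 * (X^2 + C (a0 + 2*mA + g) * X + C ((a0 + 2*mA)*g - 2*zA*w)) := by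
  have hc : Matrix.charmatrix (!![-a0, mB, 0, -mB, zB;
        0, -a0 - mA, 0, mA, -zA;
        0, -mB, -a0, mB, -zB;
        0, mA, 0, -a0 - mA, zA;
        0, -w, 0, w, -g] : Matrix (Fin 5) (Fin 5) ℝ)
      = !![X + C a0, -C mB, 0, C mB, -C zB;
           0, X + C a0 + C mA, 0, -C mA, C zA;
           0, C mB, X + C a0, -C mB, C zB;
           0, -C mA, 0, X + C a0 + C mA, -C zA;
           0, C w, 0, -C w, X + C g] := by
    ext i j : 2
    fin_cases i <;> fin_cases j <;>
      simp [Matrix.charmatrix_apply, Matrix.diagonal, map_sub, map_neg, map_add,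
        Matrix.vecHead, Matrix.vecTail] <;> ring
  have h4 : (!![X + C a0, -C mB, 0, C mB, -C zB;
           0, X + C a0 + C mA, 0, -C mA, C zA;
           0, C mB, X + C a0, -C mB, C zB;
           0, -C mA, 0, X + C a0 + C mA, -C zA;
           0, C w, 0, -C w, X + C g] : Matrix (Fin 5) (Fin 5) ℝ[X]).submatrix
        (Fin.succAbove 0) Fin.succ =
      !![X + C a0 + C mA, 0, -C mA, C zA;
         C mB, X + C a0, -C mB, C zB;
         -C mA, 0, X + C a0 + C mA, -C zA;
         C w, 0, -C w, X + C g] := by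
    ext i j : 2
    fin_cases i <;> fin_cases j <;> rfl
  have h3 : (!![X + C a0 + C mA, 0, -C mA, C zA;
         C mB, X + C a0, -C mB, C zB;
         -C mA, 0, X + C a0 + C mA, -C zA;
         C w, 0, -C w, X + C g] : Matrix (Fin 4) (Fin 4) ℝ[X]).submatrix
        (Fin.succAbove 1) (Fin.succAbove 1) =
      !![X + C a0 + C mA, -C mA, C zA;
         -C mA, X + C a0 + C mA, -C zA;
         C w, -C w, X + C g] := by
    ext i j : 2
    fin_cases i <;> fin_cases j <;> rfl
  rw [Matrix.charpoly, hc, Matrix.det_succ_column_zero, Fin.sum_univ_five, h4,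
    Matrix.det_succ_column _ 1, Fin.sum_univ_four, h3, Matrix.det_fin_three]
  norm_num [Matrix.det_fin_three, Matrix.vecHead, Matrix.vecTail, map_ofNat]
  simp [Fin.succAbove, Fin.lt_def]
  ring

set_option maxHeartbeats 2000000 in
/-- Explicit value of the Jacobian of the vector field at the equilibrium point. -/
lemma motorJac_eq (l zeta lam a0 a1 b1 : ℝ) :
    motorJac l zeta lam a0 a1 b1 =
    !![-a0, lam/2*(b1/(a0*l)), 0, -(lam/2*(b1/(a0*l))), zeta*(b1/(a0*l));
       0, -a0 - lam/2*(a1/(a0*l)), 0, lam/2*(a1/(a0*l)), -(zeta*(a1/(a0*l)));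
       0, -(lam/2*(b1/(a0*l))), -a0, lam/2*(b1/(a0*l)), -(zeta*(b1/(a0*l)));
       0, lam/2*(a1/(a0*l)), 0, -a0 - lam/2*(a1/(a0*l)), zeta*(a1/(a0*l));
       0, -(l/(2*π)*(lam/2)), 0, l/(2*π)*(lam/2), -(l/(2*π)*zeta)] := by
  set e := motorEq l a0 a1 b1 with he
  set P : Fin 5 → ((Fin 5 → ℝ) →L[ℝ] ℝ) :=
    fun j => ContinuousLinearMap.proj j with hP
  set s' : (Fin 5 → ℝ) →L[ℝ] ℝ := zeta • P 4 + (lam / 2) • (P 1 - P 3) with hs'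
  have hs : HasFDerivAt (fun p : Fin 5 → ℝ => zeta * p 4 + lam / 2 * (p 1 - p 3)) s' e :=
    ((hasFDerivAt_apply 4 e).const_mul zeta).add
      (((hasFDerivAt_apply 1 e).sub (hasFDerivAt_apply 3 e)).const_mul (lam / 2))
  set s0 : ℝ := zeta * e 4 + lam / 2 * (e 1 - e 3) with hs0
  set D : Fin 5 → ((Fin 5 → ℝ) →L[ℝ] ℝ) :=
    ![(-a0) • P 0 + (s0 • P 1 + e 1 • s'),
      (-a0) • P 1 - (s0 • P 0 + e 0 • s'),
      (-a0) • P 2 - (s0 • P 3 + e 3 • s'),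
      (-a0) • P 3 + (s0 • P 2 + e 2 • s'),
      (-(l / (2 * π))) • s'] with hD
  have hF : HasFDerivAt (motorField l zeta lam a0 a1 b1) (ContinuousLinearMap.pi D) e := by
    apply hasFDerivAt_pi'.2
    intro i
    rw [ContinuousLinearMap.proj_pi]
    fin_cases i
    · exact (((hasFDerivAt_apply 0 e).const_mul (-a0)).add
        (hs.mul (hasFDerivAt_apply 1 e))).add_const (a1 / l)
    · exact (((hasFDerivAt_apply 1 e).const_mul (-a0)).sub
        (hs.mul (hasFDerivAt_apply 0 e))).add_const (b1 / l)
    · exact (((hasFDerivAt_apply 2 e).const_mul (-a0)).sub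
        (hs.mul (hasFDerivAt_apply 3 e))).add_const (a1 / l)
    · exact (((hasFDerivAt_apply 3 e).const_mul (-a0)).add
        (hs.mul (hasFDerivAt_apply 2 e))).add_const (b1 / l)
    · exact hs.const_mul (-(l / (2 * π)))
  have hfd := hF.fderiv
  ext i j
  rw [motorJac, Matrix.of_apply, ← he, hfd]
  have he0 : e 0 = a1 / (a0 * l) := rfl
  have he1 : e 1 = b1 / (a0 * l) := rfl
  have he2 : e 2 = a1 / (a0 * l) := rfl
  have he3 : e 3 = b1 / (a0 * l) := rfl
  have hs00 : s0 = 0 := by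
    rw [hs0]; show zeta * 0 + lam / 2 * (b1 / (a0 * l) - b1 / (a0 * l)) = _; ring
  fin_cases i <;> fin_cases j <;>
    simp [hD, hs', hP, hs00, he0, he1, he2, he3, Pi.single_apply, Matrix.vecHead,
      Matrix.vecTail] <;> ring

/-- **Equilibrium and characteristic polynomial of the linearization**: `e` is a
zero of the vector field, and the characteristic polynomial of the Jacobian at `e`
is `(X + a₀)³ (X² − 2τX + ζℓa₀/(2π))` with
`τ = −(1/4)(2a₀ + ζℓ/π + 2λa₁/(a₀ℓ))`; in particular `−a₀` is an eigenvalue of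
multiplicity (at least) three. -/
theorem motorField_equilibrium_charpoly
    (l zeta lam a0 a1 b1 : ℝ)
    (hl : 0 < l) (hzeta : 0 < zeta) (hlam : 0 < lam) (ha0 : 0 < a0)
    (τ : ℝ) (hτ : τ = -(1 / 4) * (2 * a0 + zeta * l / π + 2 * lam * a1 / (a0 * l))) :
    motorField l zeta lam a0 a1 b1 (motorEq l a0 a1 b1) = 0 ∧
    (motorJac l zeta lam a0 a1 b1).charpoly
      = (X + C a0) ^ 3 * (X ^ 2 - C (2 * τ) * X + C (zeta * l * a0 / (2 * π))) ∧
    3 ≤ (motorJac l zeta lam a0 a1 b1).charpoly.rootMultiplicity (-a0) ∧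
    Module.End.HasEigenvalue
      (Matrix.toLin' (motorJac l zeta lam a0 a1 b1)) (-a0) := by
  have hl' : l ≠ 0 := hl.ne'
  have ha0' : a0 ≠ 0 := ha0.ne'
  have hπ : (π : ℝ) ≠ 0 := Real.pi_ne_zero
  have hcp : (motorJac l zeta lam a0 a1 b1).charpoly
      = (X + C a0) ^ 3 * (X ^ 2 - C (2 * τ) * X + C (zeta * l * a0 / (2 * π))) := by
    rw [motorJac_eq, motor_charpoly_aux]
    have hu : a0 + 2*(lam/2*(a1/(a0*l))) + l/(2*π)*zeta = -(2 * τ) := by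
      rw [hτ]; field_simp; ring
    have hv : (a0 + 2*(lam/2*(a1/(a0*l))))*(l/(2*π)*zeta) -
        2*(zeta*(a1/(a0*l)))*(l/(2*π)*(lam/2)) = zeta * l * a0 / (2 * π) := by
      field_simp; ring
    rw [hu, hv, map_neg]
    ring
  have hne : (motorJac l zeta lam a0 a1 b1).charpoly ≠ 0 :=
    (Matrix.charpoly_monic _).ne_zero
  refine ⟨?_, hcp, ?_, ?_⟩
  · funext i
    fin_cases i <;>
      simp [motorField, motorEq, Matrix.vecHead, Matrix.vecTail] <;>
      field_simp <;> ring
  · rw [Polynomial.le_rootMultiplicity_iff hne, hcp]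
    have hX : (X - C (-a0) : ℝ[X]) = X + C a0 := by rw [map_neg, sub_neg_eq_add]
    rw [hX]
    exact dvd_mul_right _ _
  · apply Module.End.hasEigenvalue_of_hasEigenvector (x := Pi.single 0 1)
    constructor
    · rw [Module.End.mem_eigenspace_iff, Matrix.toLin'_apply, Matrix.mulVec_single,
        motorJac_eq]
      funext i
      fin_cases i <;>
        simp [Pi.single_apply, Matrix.vecHead, Matrix.vecTail]
    · intro h
      have := congrFun h 0
      simp at this
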